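/- Let T(x) = √(1-2x), H₀(x) = 1/40 − T²/12 + T⁴/8 − T⁵/15, and H₁(x) = (1/24)·log(1/T) + (1/24)·(1−T) for 0 ≤ x < 1/2. Then x·H₁''(x) + (1/2)·H₁'(x) − (1/2)·H₀''(x)·H₁''(x) − (1/24)·H₀''''(x) = 0. -/

import Mathlib

noncomputable def H0 : ℝ → ℝ := fun x =>
  1/40 - (Real.sqrt (1 - 2*x))^2/12 + (Real.sqrt (1 - 2*x))^4/8
    - (Real.sqrt (1 - 2*x))^5/15

noncomputable def H1 : ℝ → ℝ := fun x =>
  (1/24) * Real.log (1 / Real.sqrt (1 - 2*x)) + (1/24) * (1 - Real.sqrt (1 - 2*x))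

noncomputable def TT : ℝ → ℝ := fun y => Real.sqrt (1 - 2*y)

noncomputable def g1 : ℝ → ℝ := fun y => 1/6 - (TT y)^2/2 + (TT y)^3/3
noncomputable def g2 : ℝ → ℝ := fun y => 1 - TT y
noncomputable def g3 : ℝ → ℝ := fun y => (TT y)⁻¹
noncomputable def h1 : ℝ → ℝ := fun y => (1/24) * (((TT y)^2)⁻¹ + (TT y)⁻¹)

lemma TT_pos {y : ℝ} (hy : y < 1/2) : 0 < TT y := by
  unfold TT; exact Real.sqrt_pos.mpr (by linarith)

lemma TT_ne {y : ℝ} (hy : y < 1/2) : TT y ≠ 0 := ne_of_gt (TT_pos hy)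

lemma TT_sq {y : ℝ} (hy : y < 1/2) : (TT y)^2 = 1 - 2*y :=
  Real.sq_sqrt (by linarith)

lemma hasDerivTT {y : ℝ} (hy : y < 1/2) : HasDerivAt TT (-(TT y)⁻¹) y := by
  have h : (0:ℝ) < 1 - 2*y := by linarith
  have h1 : HasDerivAt (fun z : ℝ => 1 - 2*z) (-2) y := by
    simpa using ((hasDerivAt_id y).const_mul (2:ℝ)).const_sub 1
  have h2 := (Real.hasDerivAt_sqrt (ne_of_gt h)).comp y h1
  have hs : Real.sqrt (1 - 2*y) ≠ 0 := TT_ne hy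
  convert h2 using 1
  rfl
  show -(Real.sqrt (1 - 2*y))⁻¹ = _
  ring
  all_goals rfl

lemma derivH0 {y : ℝ} (hy : y < 1/2) : HasDerivAt H0 (g1 y) y := by
  have ht := hasDerivTT hy
  have hs := TT_ne hy
  have h : HasDerivAt (fun z => 1/40 - (TT z)^2/12 + (TT z)^4/8 - (TT z)^5/15)
      (0 - (2 * TT y ^ 1 * (-(TT y)⁻¹))/12 + (4 * TT y ^ 3 * (-(TT y)⁻¹))/8
        - (5 * TT y ^ 4 * (-(TT y)⁻¹))/15) y := by
    exact (((hasDerivAt_const y (1/40:ℝ)).sub ((ht.pow 2).div_const 12)).add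
      ((ht.pow 4).div_const 8)).sub ((ht.pow 5).div_const 15)
  convert h using 1
  rfl
  simp only [g1]
  field_simp
  ring

lemma derivg1 {y : ℝ} (hy : y < 1/2) : HasDerivAt g1 (g2 y) y := by
  have ht := hasDerivTT hy
  have hs := TT_ne hy
  have h : HasDerivAt (fun z => 1/6 - (TT z)^2/2 + (TT z)^3/3)
      (0 - (2 * TT y ^ 1 * (-(TT y)⁻¹))/2 + (3 * TT y ^ 2 * (-(TT y)⁻¹))/3) y :=
    ((hasDerivAt_const y (1/6:ℝ)).sub ((ht.pow 2).div_const 2)).add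
      ((ht.pow 3).div_const 3)
  convert h using 1
  rfl
  simp only [g2]
  field_simp
  ring

lemma derivg2 {y : ℝ} (hy : y < 1/2) : HasDerivAt g2 (g3 y) y := by
  have ht := hasDerivTT hy
  have h : HasDerivAt (fun z => 1 - TT z) (-(-(TT y)⁻¹)) y := ht.const_sub 1
  convert h using 1
  rfl
  simp [g3]

lemma derivg3 {y : ℝ} (hy : y < 1/2) : HasDerivAt g3 (((TT y)^3)⁻¹) y := by
  have ht := hasDerivTT hy
  have hs := TT_ne hy
  have h : HasDerivAt (fun z => (TT z)⁻¹) (-(-(TT y)⁻¹) / (TT y)^2) y := ht.inv hs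
  convert h using 1
  rfl
  field_simp

lemma derivH1 {y : ℝ} (hy : y < 1/2) : HasDerivAt H1 (h1 y) y := by
  have ht := hasDerivTT hy
  have hs := TT_ne hy
  have hlog : HasDerivAt (fun z => Real.log (TT z)) ((TT y)⁻¹ * (-(TT y)⁻¹)) y := by
    exact (Real.hasDerivAt_log hs).comp y ht
  have hH1 : H1 = fun z => (1/24) * (- Real.log (TT z)) + (1/24) * (1 - TT z) := by
    funext z
    simp only [H1, TT, one_div, Real.log_inv]
  rw [hH1]
  have h : HasDerivAt (fun z => (1/24) * (- Real.log (TT z)) + (1/24) * (1 - TT z))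
      ((1/24) * (-((TT y)⁻¹ * (-(TT y)⁻¹))) + (1/24) * (-(-(TT y)⁻¹))) y :=
    ((hlog.neg).const_mul (1/24)).add ((ht.const_sub 1).const_mul (1/24))
  convert h using 1
  simp only [h1]
  field_simp

lemma derivh1 {y : ℝ} (hy : y < 1/2) :
    HasDerivAt h1 ((1/24) * (2 * ((TT y)^4)⁻¹ + ((TT y)^3)⁻¹)) y := by
  have ht := hasDerivTT hy
  have hs := TT_ne hy
  have hsq : (TT y)^2 ≠ 0 := pow_ne_zero 2 hs
  have h : HasDerivAt h1
      ((1/24) * ((-(2 * TT y ^ 1 * (-(TT y)⁻¹)) / ((TT y)^2)^2) + (-(-(TT y)⁻¹) / (TT y)^2))) y :=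
    (((ht.pow 2).inv hsq).add (ht.inv hs)).const_mul (1/24)
  convert h using 1
  field_simp

lemma ev {f g : ℝ → ℝ} {x : ℝ} (hx : x < 1/2)
    (h : ∀ y, y < 1/2 → deriv f y = g y) : deriv f =ᶠ[nhds x] g :=
  Filter.eventually_of_mem (Iio_mem_nhds hx) (fun y hy => h y hy)

theorem stmt4 (x : ℝ) (hx0 : 0 ≤ x) (hx : x < 1/2) :
    x * iteratedDeriv 2 H1 x + (1/2) * deriv H1 x
      - (1/2) * iteratedDeriv 2 H0 x * iteratedDeriv 2 H1 x
      - (1/24) * iteratedDeriv 4 H0 x = 0 := by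
  have hd1 : ∀ y, y < 1/2 → deriv H0 y = g1 y := fun y hy => (derivH0 hy).deriv
  have hd2 : ∀ y, y < 1/2 → deriv (deriv H0) y = g2 y := fun y hy => by
    rw [Filter.EventuallyEq.deriv_eq (ev hy hd1)]; exact (derivg1 hy).deriv
  have hd3 : ∀ y, y < 1/2 → deriv (deriv (deriv H0)) y = g3 y := fun y hy => by
    rw [Filter.EventuallyEq.deriv_eq (ev hy hd2)]; exact (derivg2 hy).deriv
  have hd4 : deriv (deriv (deriv (deriv H0))) x = ((TT x)^3)⁻¹ := by
    rw [Filter.EventuallyEq.deriv_eq (ev hx hd3)]; exact (derivg3 hx).deriv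
  have he1 : ∀ y, y < 1/2 → deriv H1 y = h1 y := fun y hy => (derivH1 hy).deriv
  have he2 : deriv (deriv H1) x = (1/24) * (2 * ((TT x)^4)⁻¹ + ((TT x)^3)⁻¹) := by
    rw [Filter.EventuallyEq.deriv_eq (ev hx he1)]; exact (derivh1 hx).deriv
  have i2H0 : iteratedDeriv 2 H0 x = g2 x := by
    rw [iteratedDeriv_succ, iteratedDeriv_one]; exact hd2 x hx
  have i4H0 : iteratedDeriv 4 H0 x = ((TT x)^3)⁻¹ := by
    rw [show (4:ℕ) = 3 + 1 from rfl, iteratedDeriv_succ,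
      show (3:ℕ) = 2 + 1 from rfl, iteratedDeriv_succ, iteratedDeriv_succ, iteratedDeriv_one]
    exact hd4
  have i2H1 : iteratedDeriv 2 H1 x = (1/24) * (2 * ((TT x)^4)⁻¹ + ((TT x)^3)⁻¹) := by
    rw [iteratedDeriv_succ, iteratedDeriv_one]; exact he2
  rw [i2H0, i4H0, i2H1, he1 x hx]
  simp only [g2, h1]
  have hs := TT_ne hx
  have hsq := TT_sq hx
  set t := TT x with htdef
  have hxeq : x = (1 - t^2)/2 := by rw [hsq]; ring
  rw [hxeq]
  field_simp
  ring
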